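/- Let X, Y be compact Hausdorff spaces with a group Γ acting on both, (X,Γ) minimal, and π : M → X a continuous surjective Γ-equivariant map from a minimal Γ-system M. Then π is semi-open: for every nonempty open subset V of M, the interior of π(closure(V)) is nonempty. -/

import Mathlib

open Set

/-- The homeomorphism of a space given by acting by a group element, assuming
each translation is continuous. -/
def smulHomeo {Γ Z : Type*} [Group Γ] [TopologicalSpace Z] [MulAction Γ Z]
    (hc : ∀ γ : Γ, Continuous fun z : Z => γ • z) (γ : Γ) : Z ≃ₜ Z where
  toFun := fun z => γ • z
  invFun := fun z => γ⁻¹ • z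
  left_inv := fun z => by simp [smul_smul]
  right_inv := fun z => by simp [smul_smul]
  continuous_toFun := hc γ
  continuous_invFun := hc γ⁻¹

/-- A factor map between minimal systems is semi-open: if `π : M → X` is a
continuous surjective `Γ`-equivariant map between compact Hausdorff minimal
`Γ`-systems, then for every nonempty open `V ⊆ M` the interior of
`π(closure V)` is nonempty. -/
theorem stmt11 (Γ M X : Type*) [Group Γ]
    [TopologicalSpace M] [CompactSpace M] [T2Space M]
    [TopologicalSpace X] [CompactSpace X] [T2Space X]
    [MulAction Γ M] [MulAction Γ X]
    (hcM : ∀ γ : Γ, Continuous fun m : M => γ • m)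
    (hcX : ∀ γ : Γ, Continuous fun x : X => γ • x)
    (hminM : ∀ m : M, Dense (MulAction.orbit Γ m))
    (hminX : ∀ x : X, Dense (MulAction.orbit Γ x))
    (π : M → X) (hπc : Continuous π) (hπs : Function.Surjective π)
    (hπe : ∀ (γ : Γ) (m : M), π (γ • m) = γ • π m) :
    ∀ V : Set M, IsOpen V → V.Nonempty → (interior (π '' closure V)).Nonempty := by
  intro V hV hVne
  -- translates of V cover M
  set U : Γ → Set M := fun γ => (fun m : M => γ • m) '' V with hU
  have hUopen : ∀ γ, IsOpen (U γ) := fun γ =>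
    (smulHomeo hcM γ).isOpenMap V hV
  have hcover : univ ⊆ ⋃ γ : Γ, U γ := by
    intro m _
    obtain ⟨x, hxorb, hxV⟩ := (hminM m).exists_mem_open hV hVne
    obtain ⟨γ, rfl⟩ := hxorb
    refine mem_iUnion.2 ⟨γ⁻¹, ⟨γ • m, hxV, ?_⟩⟩
    simp [smul_smul]
  obtain ⟨T, hT⟩ := isCompact_univ.elim_finite_subcover U hUopen hcover
  -- the corresponding closed sets on X
  set F : Γ → Set X := fun γ => (fun x : X => γ • x) '' (π '' closure V) with hF
  have hFclosed : ∀ γ, IsClosed (F γ) :=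
    fun γ => (((isClosed_closure.isCompact).image hπc).image (hcX γ)).isClosed
  have hFcover : (⋃ γ ∈ T, F γ) = univ := by
    apply eq_univ_of_forall
    intro x
    obtain ⟨m, rfl⟩ := hπs x
    obtain ⟨γ, hγT, v, hvV, hvm⟩ := by
      simpa [U, mem_iUnion] using hT (mem_univ m)
    refine mem_iUnion.2 ⟨γ, mem_iUnion.2 ⟨hγT, ⟨π v, ⟨v, subset_closure hvV, rfl⟩, ?_⟩⟩⟩
    simp only []; rw [← hπe, hvm]
  -- X is nonempty and Baire, so some F γ has nonempty interior
  obtain ⟨m0, hm0⟩ := hVne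
  have : Nonempty X := ⟨π m0⟩
  have hFcover' : (⋃ γ : T, F γ) = univ := by
    rw [← hFcover]; exact iUnion_subtype (fun γ => γ ∈ T) (fun γ => F γ.1) ▸ rfl
  obtain ⟨⟨γ, _⟩, hγ⟩ := nonempty_interior_of_iUnion_of_closed
    (f := fun γ : T => F γ.1) (fun γ => hFclosed γ.1) hFcover'
  -- transfer the interior back through the homeomorphism `γ • ·`
  have : interior (F γ) = (fun x : X => γ • x) '' interior (π '' closure V) := by
    exact ((smulHomeo hcX γ).image_interior (π '' closure V)).symm
  rw [this] at hγ
  exact hγ.of_image
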